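/- Formal power series identity: (Σ_{n≥2} xⁿ/(n!·2ⁿ)) · (Σ_{n≥3} xⁿ/(2β)ⁿ) ⪯ (e^β − 1 − β) · Σ_{n≥5} xⁿ/(2β)ⁿ, coefficientwise, for any β ≥ 1. -/

import Mathlib

theorem stmt_14 (β : ℝ) (hβ : 1 ≤ β) :
    let A : PowerSeries ℝ :=
      PowerSeries.mk fun n => if 2 ≤ n then 1 / ((n.factorial : ℝ) * 2^n) else 0
    let B : PowerSeries ℝ :=
      PowerSeries.mk fun n => if 3 ≤ n then 1 / (2*β)^n else 0
    ∀ n, PowerSeries.coeff n (A * B)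
      ≤ if 5 ≤ n then (Real.exp β - 1 - β) * (1 / (2*β)^n) else 0 := by
  intro A B n
  have hβ0 : (0:ℝ) < β := lt_of_lt_of_le one_pos hβ
  have h2β : (0:ℝ) < 2*β := by linarith
  simp only [A, B, PowerSeries.coeff_mul, PowerSeries.coeff_mk]
  rw [Finset.Nat.sum_antidiagonal_eq_sum_range_succ_mk]
  by_cases hn : 5 ≤ n
  · rw [if_pos hn]
    have key : ∀ k ∈ Finset.range (n+1),
        (if 2 ≤ k then 1 / ((k.factorial:ℝ) * 2^k) else 0) *
          (if 3 ≤ n - k then 1 / (2*β)^(n-k) else 0)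
        ≤ (if 2 ≤ k then β^k / k.factorial else 0) * (1/(2*β)^n) := by
      intro k hk
      have hk' : k ≤ n := Nat.lt_succ_iff.mp (Finset.mem_range.mp hk)
      by_cases h2 : 2 ≤ k
      · rw [if_pos h2, if_pos h2]
        by_cases h3 : 3 ≤ n - k
        · rw [if_pos h3]
          apply le_of_eq
          have hpow : (2*β)^n = (2^k * β^k) * (2*β)^(n-k) := by
            rw [← mul_pow, ← pow_add, Nat.add_sub_cancel' hk']
          rw [hpow]
          have hne : ((k.factorial:ℝ)) ≠ 0 := Nat.cast_ne_zero.mpr k.factorial_ne_zero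
          have hb : (2*β)^(n-k) ≠ 0 := pow_ne_zero _ (ne_of_gt h2β)
          field_simp
        · rw [if_neg h3, mul_zero]
          positivity
      · rw [if_neg h2, if_neg h2, zero_mul, zero_mul]
    have split : ∀ g : ℕ → ℝ, ∑ k ∈ Finset.range (n+1), g k
        = ∑ k ∈ Finset.Ico 0 2, g k + ∑ k ∈ Finset.Ico 2 (n+1), g k := by
      intro g
      rw [Finset.range_eq_Ico, ← Finset.sum_Ico_consecutive g (Nat.zero_le 2) (by omega)]
    calc ∑ k ∈ Finset.range (n+1),
          (if 2 ≤ k then 1 / ((k.factorial:ℝ) * 2^k) else 0) *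
            (if 3 ≤ n - k then 1 / (2*β)^(n-k) else 0)
        ≤ ∑ k ∈ Finset.range (n+1),
            (if 2 ≤ k then β^k / k.factorial else 0) * (1/(2*β)^n) :=
          Finset.sum_le_sum key
      _ = (∑ k ∈ Finset.range (n+1), if 2 ≤ k then β^k / (k.factorial:ℝ) else 0)
            * (1/(2*β)^n) := by rw [← Finset.sum_mul]
      _ ≤ (Real.exp β - 1 - β) * (1/(2*β)^n) := by
          apply mul_le_mul_of_nonneg_right _ (by positivity)
          have h1 : (∑ k ∈ Finset.range (n+1), β^k / (k.factorial:ℝ)) ≤ Real.exp β :=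
            Real.sum_le_exp_of_nonneg hβ0.le _
          have e1 : ∑ k ∈ Finset.range (n+1), (if 2 ≤ k then β^k / (k.factorial:ℝ) else 0)
              = ∑ k ∈ Finset.Ico 2 (n+1), β^k / (k.factorial:ℝ) := by
            rw [split]
            have : ∑ k ∈ Finset.Ico 0 2, (if 2 ≤ k then β^k / (k.factorial:ℝ) else 0) = 0 := by
              norm_num [Finset.sum_range_succ]
            rw [this, zero_add]
            exact Finset.sum_congr rfl fun k hk => if_pos (Finset.mem_Ico.mp hk).1
          have e2 : ∑ k ∈ Finset.range (n+1), β^k / (k.factorial:ℝ)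
              = (1 + β) + ∑ k ∈ Finset.Ico 2 (n+1), β^k / (k.factorial:ℝ) := by
            rw [split]
            congr 1
            simp [Finset.sum_range_succ]
          rw [e1]
          rw [e2] at h1
          linarith
  · rw [if_neg hn]
    apply le_of_eq
    apply Finset.sum_eq_zero
    intro k hk
    have hk' : k ≤ n := Nat.lt_succ_iff.mp (Finset.mem_range.mp hk)
    by_cases h2 : 2 ≤ k
    · rw [if_neg (by omega : ¬ 3 ≤ n - k), mul_zero]
    · rw [if_neg h2, zero_mul]
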